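/- arXiv:2604.22236 — 2 statements merged into one kernel-verified Lean document; each statement's English description precedes it below -/
import Mathlib

section
/- Under the stability assumption, for any fixed β ∈ (0,1), the random variable α̂_d(β) := (1/d) Σ_{j=1}^{⌊βd⌋} X*_{d,(j)} converges in probability, as d → ∞, to ∫_0^β Q*(q) dq; in particular E[α̂_d(β)] = (1/d) Σ_{j=1}^{⌊βd⌋} p*_{d,(j)} → ∫_0^β Q*(q) dq and Var(α̂_d(β)) ≤ 1/(4d). -/
/-!
Statement 9: Under the stability assumption, for any fixed `β ∈ (0,1)`, the
random variable `α̂_d(β) := (1/d) Σ_{j=1}^{⌊βd⌋} X*_{d,(j)}` converges in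
probability, as `d → ∞`, to `∫_0^β Q*(q) dq`; in particular
`E[α̂_d(β)] = (1/d) Σ_{j=1}^{⌊βd⌋} p*_{d,(j)} → ∫_0^β Q*(q) dq` and
`Var(α̂_d(β)) ≤ 1/(4d)`.
-/

open Finset MeasureTheory ProbabilityTheory Filter


set_option linter.unusedSectionVars false
set_option linter.unusedVariables false
set_option maxHeartbeats 1000000

open Finset MeasureTheory ProbabilityTheory Filter


section Bern
variable {Ω : Type*} [MeasurableSpace Ω] {μ : Measure Ω} [IsProbabilityMeasure μ]

lemma bern_eq_indicator {Y : Ω → ℝ} (hval : ∀ ω, Y ω = 0 ∨ Y ω = 1) :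
    Y = fun ω => Set.indicator {ω | Y ω = 1} (fun _ => (1:ℝ)) ω := by
  funext ω
  rcases hval ω with h | h <;> simp [Set.indicator, h]

lemma bern_integrable {Y : Ω → ℝ} (hm : Measurable Y) (hval : ∀ ω, Y ω = 0 ∨ Y ω = 1) :
    Integrable Y μ := by
  refine (integrable_const (1:ℝ)).mono' hm.aestronglyMeasurable ?_
  filter_upwards with ω
  rcases hval ω with h | h <;> simp [h]

lemma bern_integral {Y : Ω → ℝ} {q : ℝ} (hm : Measurable Y) (hval : ∀ ω, Y ω = 0 ∨ Y ω = 1)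
    (hq : 0 ≤ q) (hμ : μ {ω | Y ω = 1} = ENNReal.ofReal q) :
    ∫ ω, Y ω ∂μ = q := by
  have hs : MeasurableSet {ω | Y ω = 1} := hm (measurableSet_singleton 1)
  calc ∫ ω, Y ω ∂μ = ∫ ω, Set.indicator {ω | Y ω = 1} (fun _ => (1:ℝ)) ω ∂μ := by
        rw [← bern_eq_indicator hval]
    _ = (μ {ω | Y ω = 1}).toReal • (1:ℝ) := integral_indicator_const _ hs
    _ = q := by rw [hμ, ENNReal.toReal_ofReal hq]; simp

lemma bern_var {Y : Ω → ℝ} {q : ℝ} (hm : Measurable Y) (hval : ∀ ω, Y ω = 0 ∨ Y ω = 1)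
    (hq : 0 ≤ q) (hμ : μ {ω | Y ω = 1} = ENNReal.ofReal q) :
    ∫ ω, (Y ω - q) ^ 2 ∂μ = q * (1 - q) := by
  have h1 : ∀ ω, (Y ω - q) ^ 2 = (1 - 2 * q) * Y ω + q ^ 2 := by
    intro ω; rcases hval ω with h | h <;> rw [h] <;> ring
  have hint : Integrable Y μ := bern_integrable hm hval
  calc ∫ ω, (Y ω - q) ^ 2 ∂μ = ∫ ω, ((1 - 2 * q) * Y ω + q ^ 2) ∂μ := by
        simp_rw [h1]
    _ = (1 - 2*q) * ∫ ω, Y ω ∂μ + q ^ 2 := by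
        rw [integral_add (hint.const_mul _) (integrable_const _), MeasureTheory.integral_const_mul,
          integral_const]
        simp
    _ = q * (1 - q) := by rw [bern_integral hm hval hq hμ]; ring
end Bern


section Star
variable {Ω : Type*} [MeasurableSpace Ω] {μ : Measure Ω} [IsProbabilityMeasure μ]
  {X : Ω → ℝ} {p : ℝ}

lemma star_meas (hm : Measurable X) (p : ℝ) :
    Measurable (fun ω => if p ≤ 1/2 then X ω else 1 - X ω) := by
  by_cases h : p ≤ 1/2 <;> simp only [h, if_true, if_false]
  · exact hm
  · exact (measurable_const.sub hm)

lemma star_val (hval : ∀ ω, X ω = 0 ∨ X ω = 1) (p : ℝ) (ω : Ω) :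
    (if p ≤ 1/2 then X ω else 1 - X ω) = 0 ∨ (if p ≤ 1/2 then X ω else 1 - X ω) = 1 := by
  by_cases h : p ≤ 1/2 <;> simp only [h, if_true, if_false]
  · exact hval ω
  · rcases hval ω with h' | h' <;> simp [h']

lemma star_measure (hm : Measurable X) (hval : ∀ ω, X ω = 0 ∨ X ω = 1)
    (hp : p ∈ Set.Icc (0:ℝ) 1) (hb : μ {ω | X ω = 1} = ENNReal.ofReal p) :
    μ {ω | (if p ≤ 1/2 then X ω else 1 - X ω) = 1} = ENNReal.ofReal (min p (1 - p)) := by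
  by_cases h : p ≤ 1/2
  · have : min p (1-p) = p := min_eq_left (by linarith)
    simp only [h, if_true, this, hb]
  · have hmin : min p (1-p) = 1 - p := min_eq_right (by linarith)
    have hset : {ω | (1:ℝ) - X ω = 1} = {ω | X ω = 1}ᶜ := by
      ext ω; rcases hval ω with h' | h' <;> simp [h']
    simp only [h, if_false, hset, hmin]
    rw [measure_compl (show MeasurableSet {ω | X ω = 1} from hm (measurableSet_singleton 1)) (measure_ne_top _ _), hb]
    rw [measure_univ, ENNReal.ofReal_sub _ hp.1, ENNReal.ofReal_one]
end Star


lemma filter_eq_range_card (d : ℕ) (P : ℕ → Prop) [DecidablePred P]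
    (hdc : ∀ i j, i ≤ j → j < d → P j → P i) :
    (Finset.range d).filter P = Finset.range (((Finset.range d).filter P).card) := by
  ext m
  simp only [Finset.mem_filter, Finset.mem_range]
  constructor
  · rintro ⟨hm, hPm⟩
    have hsub : Finset.range (m+1) ⊆ (Finset.range d).filter P := by
      intro i hi
      simp only [Finset.mem_range, Nat.lt_succ_iff] at hi
      exact Finset.mem_filter.2 ⟨Finset.mem_range.2 (lt_of_le_of_lt hi hm), hdc i m hi hm hPm⟩
    have := Finset.card_le_card hsub
    simp only [Finset.card_range] at this
    omega
  · intro hm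
    by_contra hcon
    have hsub : (Finset.range d).filter P ⊆ Finset.range m := by
      intro j hj
      simp only [Finset.mem_filter, Finset.mem_range] at hj
      simp only [Finset.mem_range]
      by_contra hjm
      push_neg at hjm
      exact hcon ⟨lt_of_le_of_lt hjm hj.1, hdc m j hjm hj.1 hj.2⟩
    have := Finset.card_le_card hsub
    simp only [Finset.card_range] at this
    omega

lemma count_min {d k : ℕ} (hk : k ≤ d) {v : ℕ → ℝ}
    (hmono : ∀ i j, i ≤ j → j < d → v i ≤ v j) (t : ℝ) :
    ((Finset.range k).filter (fun j => v j ≤ t)).card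
      = min k (((Finset.range d).filter (fun j => v j ≤ t)).card) := by
  have hdc : ∀ i j, i ≤ j → j < d → v j ≤ t → v i ≤ t :=
    fun i j hij hj h => le_trans (hmono i j hij hj) h
  have h1 := filter_eq_range_card d (fun j => v j ≤ t) hdc
  set c := ((Finset.range d).filter (fun j => v j ≤ t)).card with hc
  have h2 : (Finset.range k).filter (fun j => v j ≤ t)
      = Finset.range k ∩ ((Finset.range d).filter (fun j => v j ≤ t)) := by
    ext j
    simp only [Finset.mem_filter, Finset.mem_inter, Finset.mem_range]
    constructor
    · rintro ⟨h, h'⟩; exact ⟨h, ⟨lt_of_lt_of_le h hk, h'⟩⟩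
    · rintro ⟨h, _, h'⟩; exact ⟨h, h'⟩
  rw [h2, h1]
  have : Finset.range k ∩ Finset.range c = Finset.range (min k c) := by
    ext j; simp [Finset.mem_inter, Finset.mem_range, lt_min_iff]
  rw [this, Finset.card_range]

lemma sum_gt_eq {d k : ℕ} (hk : k ≤ d) {v : ℕ → ℝ}
    (hmono : ∀ i j, i ≤ j → j < d → v i ≤ v j) (t : ℝ) :
    ∑ j ∈ Finset.range k, (if t < v j then (1:ℝ) else 0)
      = (k : ℝ) - min (k : ℝ) (((Finset.range d).filter (fun j => v j ≤ t)).card : ℝ) := by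
  have h1 : ∑ j ∈ Finset.range k, (if t < v j then (1:ℝ) else 0)
      = (((Finset.range k).filter (fun j => t < v j)).card : ℝ) := by
    rw [Finset.sum_boole]
  have h2 : ((Finset.range k).filter (fun j => t < v j)).card
      + ((Finset.range k).filter (fun j => v j ≤ t)).card = k := by
    have := Finset.card_filter_add_card_filter_not (s := Finset.range k)
      (p := fun j => v j ≤ t)
    simp only [not_le, Finset.card_range] at this
    omega
  have h3 := count_min hk hmono t
  set c := ((Finset.range d).filter (fun j => v j ≤ t)).card
  have hmin : min k c ≤ k := min_le_left _ _
  rw [h1]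
  have : ((Finset.range k).filter (fun j => t < v j)).card = k - min k c := by omega
  rw [this]
  push_cast [Nat.cast_sub hmin]
  rfl

lemma integral_ind_Iio {c : ℝ} (h0 : 0 ≤ c) (h2 : c ≤ 1/2) :
    ∫ t in Set.Ioo (0:ℝ) (1/2), (if t < c then (1:ℝ) else 0) = c := by
  have he : (fun t => if t < c then (1:ℝ) else 0)
      = Set.indicator (Set.Iio c) (fun _ => (1:ℝ)) := by
    funext t; simp [Set.indicator_apply, Set.mem_Iio]
  rw [he, integral_indicator measurableSet_Iio]
  rw [setIntegral_const, measureReal_def, Measure.restrict_apply measurableSet_Iio]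
  have : Set.Iio c ∩ Set.Ioo (0:ℝ) (1/2) = Set.Ioo 0 c := by
    ext x
    simp only [Set.mem_inter_iff, Set.mem_Iio, Set.mem_Ioo]
    constructor
    · rintro ⟨h, h', _⟩; exact ⟨h', h⟩
    · rintro ⟨h, h'⟩; exact ⟨h', h, lt_of_lt_of_le h' h2⟩
  rw [this, Real.volume_Ioo]
  simp [ENNReal.toReal_ofReal h0]

noncomputable instance fin_restrict : IsFiniteMeasure (volume.restrict (Set.Ioo (0:ℝ) (1/2))) :=
  ⟨by rw [Measure.restrict_apply_univ]; exact measure_Ioo_lt_top⟩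

lemma integrable_ind (c : ℝ) :
    Integrable (fun t => if t < c then (1:ℝ) else 0) (volume.restrict (Set.Ioo (0:ℝ) (1/2))) := by
  have he : (fun t => if t < c then (1:ℝ) else 0)
      = Set.indicator (Set.Iio c) (fun _ => (1:ℝ)) := by
    funext t; simp [Set.indicator_apply, Set.mem_Iio]
  rw [he]
  exact (integrable_const 1).indicator measurableSet_Iio

lemma sum_smallest_eq_integral {d k : ℕ} (hk : k ≤ d) {v : ℕ → ℝ}
    (hrange : ∀ j, j < d → v j ∈ Set.Icc (0:ℝ) (1/2)) :
    ∑ j ∈ Finset.range k, v j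
      = ∫ t in Set.Ioo (0:ℝ) (1/2), (∑ j ∈ Finset.range k, if t < v j then (1:ℝ) else 0) := by
  rw [integral_finset_sum _ (fun j _ => integrable_ind (v j))]
  refine Finset.sum_congr rfl (fun j hj => ?_)
  have hjd : j < d := lt_of_lt_of_le (Finset.mem_range.1 hj) hk
  exact (integral_ind_Iio (hrange j hjd).1 (hrange j hjd).2).symm


-- limit of strict-inequality empirical counts
lemma tendsto_strict (p : ℕ → ℕ → ℝ) (F : ℝ → ℝ)
    (H : ∀ u ∈ Set.Icc (0:ℝ) 1, Tendsto (fun d : ℕ => (1 / (d : ℝ)) *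
        ∑ i ∈ Finset.range d, (if p d i ≤ u then (1 : ℝ) else 0)) atTop (nhds (F u)))
    (hcont : ∀ x ∈ Set.Icc (0:ℝ) 1, ContinuousWithinAt F (Set.Icc 0 1) x)
    {s : ℝ} (hs : s ∈ Set.Ioc (0:ℝ) 1) :
    Tendsto (fun d : ℕ => (1 / (d : ℝ)) *
        ∑ i ∈ Finset.range d, (if p d i < s then (1 : ℝ) else 0)) atTop (nhds (F s)) := by
  rw [Metric.tendsto_atTop]
  intro ε hε
  -- find u < s with |F u - F s| < ε/2
  have hsm : s ∈ Set.Icc (0:ℝ) 1 := ⟨le_of_lt hs.1, hs.2⟩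
  have hne : (nhdsWithin s (Set.Ico 0 s)).NeBot := by
    apply mem_closure_iff_nhdsWithin_neBot.1
    rw [closure_Ico (ne_of_lt hs.1)]
    exact ⟨le_of_lt hs.1, le_refl s⟩
  have hTF : Tendsto F (nhdsWithin s (Set.Ico 0 s)) (nhds (F s)) :=
    (hcont s hsm).mono_left (nhdsWithin_mono _ (fun y hy => ⟨hy.1, le_trans (le_of_lt hy.2) hs.2⟩))
  have hev : ∀ᶠ u in nhdsWithin s (Set.Ico 0 s), |F u - F s| < ε/2 := by
    have := hTF (Metric.ball_mem_nhds (F s) (by linarith : (0:ℝ) < ε/2))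
    filter_upwards [this] with u hu
    simpa [Real.dist_eq] using hu
  obtain ⟨u, hu1, hu2⟩ := (hev.and eventually_mem_nhdsWithin).exists
  have hum : u ∈ Set.Icc (0:ℝ) 1 := ⟨hu2.1, le_trans (le_of_lt hu2.2) hs.2⟩
  have hN1 := Metric.tendsto_atTop.1 (H u hum) (ε/2) (by linarith)
  have hN2 := Metric.tendsto_atTop.1 (H s hsm) (ε/2) (by linarith)
  obtain ⟨N1, hN1⟩ := hN1
  obtain ⟨N2, hN2⟩ := hN2
  refine ⟨max N1 N2, fun d hd => ?_⟩
  have h1 := hN1 d (le_trans (le_max_left _ _) hd)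
  have h2 := hN2 d (le_trans (le_max_right _ _) hd)
  rw [Real.dist_eq] at h1 h2 ⊢
  set A := (1 / (d : ℝ)) * ∑ i ∈ Finset.range d, (if p d i < s then (1 : ℝ) else 0)
  set B := (1 / (d : ℝ)) * ∑ i ∈ Finset.range d, (if p d i ≤ u then (1 : ℝ) else 0)
  set C := (1 / (d : ℝ)) * ∑ i ∈ Finset.range d, (if p d i ≤ s then (1 : ℝ) else 0)
  have hd0 : (0:ℝ) ≤ 1 / (d:ℝ) := by positivity
  have hBA : B ≤ A := by
    apply mul_le_mul_of_nonneg_left _ hd0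
    apply Finset.sum_le_sum
    intro i _
    by_cases h : p d i ≤ u
    · rw [if_pos h, if_pos (lt_of_le_of_lt h hu2.2)]
    · rw [if_neg h]
      by_cases h' : p d i < s <;> simp [h']
  have hAC : A ≤ C := by
    apply mul_le_mul_of_nonneg_left _ hd0
    apply Finset.sum_le_sum
    intro i _
    by_cases h : p d i < s
    · rw [if_pos h, if_pos (le_of_lt h)]
    · rw [if_neg h]
      by_cases h' : p d i ≤ s <;> simp [h']
  rw [abs_lt] at h1 h2 ⊢
  have habs : |F u - F s| < ε/2 := hu1
  rw [abs_lt] at habs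
  constructor <;> nlinarith [h1.1, h1.2, h2.1, h2.2, habs.1, habs.2]

lemma min_sub_max (a b : ℝ) : a - min a b = max (a - b) 0 := by
  rcases le_total a b with h | h
  · rw [min_eq_left h, max_eq_right (by linarith), sub_self]
  · rw [min_eq_right h, max_eq_left (by linarith)]

-- the main convergence of means
lemma mean_conv
    (p : ℕ → ℕ → ℝ) (hp : ∀ d i, i < d → p d i ∈ Set.Icc (0 : ℝ) 1)
    (pstar : ℕ → ℕ → ℝ)
    (hpstar : ∀ d i, pstar d i = min (p d i) (1 - p d i))
    (ord : ℕ → ℕ → ℕ)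
    (hord_bij : ∀ d, Set.BijOn (ord d) (Set.Iio d) (Set.Iio d))
    (hord_mono : ∀ d j j', j ≤ j' → j' < d → pstar d (ord d j) ≤ pstar d (ord d j'))
    (F : ℝ → ℝ) (hF_mono : MonotoneOn F (Set.Icc 0 1))
    (H : ∀ u ∈ Set.Icc (0:ℝ) 1, Tendsto (fun d : ℕ => (1 / (d : ℝ)) *
        ∑ i ∈ Finset.range d, (if p d i ≤ u then (1 : ℝ) else 0)) atTop (nhds (F u)))
    (hcont : ∀ x ∈ Set.Icc (0:ℝ) 1, ContinuousWithinAt F (Set.Icc 0 1) x)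
    (Fstar : ℝ → ℝ)
    (hFstar : ∀ t, Fstar t = if t ≤ 1 / 2 then F t + 1 - F (1 - t) else 1)
    (β : ℝ) (hβ : β ∈ Set.Ioo (0 : ℝ) 1) :
    Tendsto (fun d : ℕ => (1 / (d : ℝ)) *
        ∑ j ∈ Finset.range (Nat.floor (β * d)), pstar d (ord d j))
      atTop (nhds (∫ t in Set.Ioo (0:ℝ) (1/2), max (β - Fstar t) 0)) := by
  -- basic facts
  have hkd : ∀ d : ℕ, Nat.floor (β * d) ≤ d := by
    intro d
    have h1 : β * (d:ℝ) ≤ (d:ℝ) := by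
      nlinarith [Nat.cast_nonneg (α := ℝ) d, hβ.1, hβ.2]
    calc Nat.floor (β * (d:ℝ)) ≤ Nat.floor ((d:ℝ)) := Nat.floor_le_floor h1
      _ = d := Nat.floor_natCast d
  have hordlt : ∀ d j, j < d → ord d j < d := by
    intro d j hj
    exact (hord_bij d).mapsTo hj
  have hprange : ∀ d j, j < d → pstar d (ord d j) ∈ Set.Icc (0:ℝ) (1/2) := by
    intro d j hj
    have hpo := hp d (ord d j) (hordlt d j hj)
    rw [hpstar]
    constructor
    · exact le_min hpo.1 (by linarith [hpo.2])
    · rcases le_total (p d (ord d j)) (1/2) with h | h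
      · exact le_trans (min_le_left _ _) h
      · exact le_trans (min_le_right _ _) (by linarith)
  -- Step 1: identity  (1/d) Σ_{j<k} pstar = ∫_{Ioo 0 1/2} Fn d t
  have hident : ∀ d : ℕ, (1 / (d : ℝ)) *
      ∑ j ∈ Finset.range (Nat.floor (β * d)), pstar d (ord d j)
      = ∫ t in Set.Ioo (0:ℝ) (1/2), ((1 / (d : ℝ)) *
          ∑ j ∈ Finset.range (Nat.floor (β * d)),
            (if t < pstar d (ord d j) then (1:ℝ) else 0)) := by
    intro d
    rw [MeasureTheory.integral_const_mul]
    congr 1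
    exact sum_smallest_eq_integral (hkd d) (fun j hj => hprange d j hj)
  simp_rw [hident]
  -- Step 2: dominated convergence
  have h12 : (0:ℝ) < 1/2 := by norm_num
  apply MeasureTheory.tendsto_integral_of_dominated_convergence (fun _ => (1:ℝ))
  · intro d
    apply Measurable.aestronglyMeasurable
    apply Measurable.const_mul
    apply Finset.measurable_sum
    intro j _
    exact Measurable.ite (measurableSet_lt measurable_id measurable_const)
      measurable_const measurable_const
  · exact integrable_const 1
  · intro d
    filter_upwards with t
    have hnn : (0:ℝ) ≤ ∑ j ∈ Finset.range (Nat.floor (β * d)),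
        (if t < pstar d (ord d j) then (1:ℝ) else 0) := by
      apply Finset.sum_nonneg
      intro j _
      split_ifs <;> norm_num
    have hub : ∑ j ∈ Finset.range (Nat.floor (β * d)),
        (if t < pstar d (ord d j) then (1:ℝ) else 0) ≤ (Nat.floor (β * d) : ℝ) := by
      calc _ ≤ ∑ j ∈ Finset.range (Nat.floor (β * d)), (1:ℝ) := by
              apply Finset.sum_le_sum; intro j _; split_ifs <;> norm_num
        _ = (Nat.floor (β * d) : ℝ) := by simp
    rw [Real.norm_eq_abs, abs_of_nonneg (by positivity)]
    rcases Nat.eq_zero_or_pos d with hd | hd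
    · subst hd; simp
    · have hd0 : (0:ℝ) < d := by exact_mod_cast hd
      rw [div_mul_eq_mul_div, one_mul, div_le_one hd0]
      calc _ ≤ (Nat.floor (β * d) : ℝ) := hub
        _ ≤ (d : ℝ) := by exact_mod_cast hkd d
  · -- pointwise convergence
    rw [ae_restrict_iff' measurableSet_Ioo]
    filter_upwards with t ht
    have ht1 : t ∈ Set.Icc (0:ℝ) 1 := ⟨le_of_lt ht.1, by linarith [ht.2]⟩
    have hst : (1 - t) ∈ Set.Ioc (0:ℝ) 1 := ⟨by linarith [ht.2], by linarith [ht.1]⟩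
    -- limit of empirical star cdf
    have hcstar : Tendsto (fun d : ℕ => (1 / (d : ℝ)) *
        ∑ i ∈ Finset.range d, (if pstar d i ≤ t then (1:ℝ) else 0))
        atTop (nhds (Fstar t)) := by
      have hdecomp : ∀ d : ℕ, ∀ i < d, (if pstar d i ≤ t then (1:ℝ) else 0)
          = (if p d i ≤ t then (1:ℝ) else 0) + (1 - (if p d i < 1 - t then (1:ℝ) else 0)) := by
        intro d i hi
        have hpi := hp d i hi
        rw [hpstar]
        rcases le_or_gt (p d i) t with h1 | h1
        · rw [if_pos h1, if_pos (by linarith [ht.2] : p d i < 1 - t),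
            if_pos (le_trans (min_le_left _ _) h1)]
          ring
        · rcases lt_or_ge (p d i) (1-t) with h2 | h2
          · rw [if_neg (not_le.2 h1), if_pos h2,
              if_neg (not_le.2 (lt_min (by linarith) (by linarith)))]
            ring
          · rw [if_neg (not_le.2 h1), if_neg (not_lt.2 h2),
              if_pos (le_trans (min_le_right _ _) (by linarith))]
            ring
      have hsum : ∀ d : ℕ, (1 / (d : ℝ)) *
          ∑ i ∈ Finset.range d, (if pstar d i ≤ t then (1:ℝ) else 0)
          = (1 / (d : ℝ)) * ∑ i ∈ Finset.range d, (if p d i ≤ t then (1:ℝ) else 0)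
            + (1 / (d : ℝ)) * d
            - (1 / (d : ℝ)) * ∑ i ∈ Finset.range d, (if p d i < 1 - t then (1:ℝ) else 0) := by
        intro d
        have : ∑ i ∈ Finset.range d, (if pstar d i ≤ t then (1:ℝ) else 0)
            = ∑ i ∈ Finset.range d, ((if p d i ≤ t then (1:ℝ) else 0)
              + (1 - (if p d i < 1 - t then (1:ℝ) else 0))) :=
          Finset.sum_congr rfl (fun i hi => hdecomp d i (Finset.mem_range.1 hi))
        rw [this, Finset.sum_add_distrib, Finset.sum_sub_distrib, Finset.sum_const,
          Finset.card_range]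
        push_cast
        ring
      simp_rw [hsum]
      have hT1 := H t ht1
      have hT2 := tendsto_strict p F H hcont hst
      have hT3 : Tendsto (fun d : ℕ => (1 / (d : ℝ)) * d) atTop (nhds 1) := by
        have : ∀ᶠ d : ℕ in atTop, (1 / (d : ℝ)) * d = 1 := by
          filter_upwards [eventually_ge_atTop 1] with d hd
          have : (d:ℝ) ≠ 0 := by positivity
          field_simp
        exact Tendsto.congr' (EventuallyEq.symm this) tendsto_const_nhds
      have := (hT1.add hT3).sub hT2
      have heq : Fstar t = F t + 1 - F (1 - t) := by
        rw [hFstar, if_pos (le_of_lt ht.2)]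
      rw [heq]
      exact this
    -- limit of k/d
    have hkconv : Tendsto (fun d : ℕ => ((Nat.floor (β * d) : ℕ) : ℝ) / (d:ℝ))
        atTop (nhds β) := by
      exact (tendsto_nat_floor_mul_div_atTop (le_of_lt hβ.1)).comp
        tendsto_natCast_atTop_atTop
    -- algebraic identity for d ≥ 1
    have halg : ∀ᶠ d : ℕ in atTop, (1 / (d : ℝ)) *
        ∑ j ∈ Finset.range (Nat.floor (β * d)),
          (if t < pstar d (ord d j) then (1:ℝ) else 0)
        = ((Nat.floor (β * d) : ℕ) : ℝ) / (d:ℝ)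
          - min (((Nat.floor (β * d) : ℕ) : ℝ) / (d:ℝ))
            ((1 / (d : ℝ)) * ∑ i ∈ Finset.range d, (if pstar d i ≤ t then (1:ℝ) else 0)) := by
      filter_upwards [eventually_ge_atTop 1] with d hd
      have hd0 : (0:ℝ) < d := by exact_mod_cast hd
      have hbij : ∑ j ∈ Finset.range d, (if pstar d (ord d j) ≤ t then (1:ℝ) else 0)
          = ∑ i ∈ Finset.range d, (if pstar d i ≤ t then (1:ℝ) else 0) := by
        apply Finset.sum_bij (fun j _ => ord d j)
        · intro j hj
          exact Finset.mem_range.2 (hordlt d j (Finset.mem_range.1 hj))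
        · intro j1 hj1 j2 hj2 he
          exact (hord_bij d).injOn (Finset.mem_range.1 hj1) (Finset.mem_range.1 hj2) he
        · intro i hi
          obtain ⟨j, hj, hje⟩ := (hord_bij d).surjOn (Finset.mem_range.1 hi)
          exact ⟨j, Finset.mem_range.2 hj, hje⟩
        · intro j _
          rfl
      have hcard : ((((Finset.range d).filter
            (fun j => pstar d (ord d j) ≤ t)).card : ℕ) : ℝ)
          = ∑ i ∈ Finset.range d, (if pstar d i ≤ t then (1:ℝ) else 0) := by
        rw [← hbij, Finset.sum_boole]
      rw [sum_gt_eq (hkd d) (hord_mono d) t]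
      rw [hcard]
      set c := ∑ i ∈ Finset.range d, (if pstar d i ≤ t then (1:ℝ) else 0)
      set k := ((Nat.floor (β * d) : ℕ) : ℝ)
      have hthis : min (k / (d:ℝ)) ((1/(d:ℝ)) * c) = (min k c) / d := by
        rw [mul_comm ((1:ℝ)/(d:ℝ)) c, ← div_eq_mul_one_div]
        exact min_div_div_right (le_of_lt hd0) k c
      rw [hthis]
      field_simp
    -- combine
    apply Tendsto.congr' (EventuallyEq.symm halg)
    have hlim := hkconv.sub (hkconv.min hcstar)
    rw [min_sub_max] at hlim
    exact hlim


section Fcont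
variable {F Fstar : ℝ → ℝ}

lemma keyA (hF_mono : MonotoneOn F (Set.Icc 0 1))
    (hFstar : ∀ t, Fstar t = if t ≤ 1 / 2 then F t + 1 - F (1 - t) else 1)
    {t u : ℝ} (ht : t ∈ Set.Icc (0:ℝ) (1/2)) (hu : u ∈ Set.Icc (0:ℝ) (1/2))
    (htu : t ≤ u) :
    |F u - F t| ≤ |Fstar u - Fstar t| ∧ |F (1-u) - F (1-t)| ≤ |Fstar u - Fstar t| := by
  have ht1 : t ∈ Set.Icc (0:ℝ) 1 := ⟨ht.1, by linarith [ht.2]⟩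
  have hu1 : u ∈ Set.Icc (0:ℝ) 1 := ⟨hu.1, by linarith [hu.2]⟩
  have h1t : (1-t) ∈ Set.Icc (0:ℝ) 1 := ⟨by linarith [ht.2], by linarith [ht.1]⟩
  have h1u : (1-u) ∈ Set.Icc (0:ℝ) 1 := ⟨by linarith [hu.2], by linarith [hu.1]⟩
  have m1 : F t ≤ F u := hF_mono ht1 hu1 htu
  have m2 : F (1-u) ≤ F (1-t) := hF_mono h1u h1t (by linarith)
  have hd : Fstar u - Fstar t = (F u - F t) + (F (1-t) - F (1-u)) := by
    rw [hFstar u, hFstar t, if_pos hu.2, if_pos ht.2]; ring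
  rw [abs_of_nonneg (by linarith), abs_of_nonneg (by linarith),
    abs_of_nonpos (by linarith)]
  constructor <;> linarith

lemma boundA (hF_mono : MonotoneOn F (Set.Icc 0 1))
    (hFstar : ∀ t, Fstar t = if t ≤ 1 / 2 then F t + 1 - F (1 - t) else 1)
    (hFstar_mono : MonotoneOn Fstar (Set.Icc 0 1)) :
    ∀ u ∈ Set.Icc (0:ℝ) 1, ∀ x ∈ Set.Icc (0:ℝ) 1,
      |F u - F x| ≤ |Fstar u - Fstar x| + |Fstar (1-u) - Fstar (1-x)| := by
  have main : ∀ u ∈ Set.Icc (0:ℝ) 1, ∀ x ∈ Set.Icc (0:ℝ) 1, u ≤ x →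
      |F u - F x| ≤ |Fstar u - Fstar x| + |Fstar (1-u) - Fstar (1-x)| := by
    intro u hu x hx hux
    by_cases hx2 : x ≤ 1/2
    · have key := (keyA hF_mono hFstar ⟨hu.1, by linarith⟩ ⟨hx.1, hx2⟩ hux).1
      have h2 := abs_nonneg (Fstar (1-u) - Fstar (1-x))
      rw [abs_sub_comm (F x), abs_sub_comm (Fstar x)] at key
      linarith
    · by_cases hu2 : 1/2 ≤ u
      · have h1x : (1-x) ∈ Set.Icc (0:ℝ) (1/2) := ⟨by linarith [hx.2], by linarith⟩
        have h1u : (1-u) ∈ Set.Icc (0:ℝ) (1/2) := ⟨by linarith [hu.2], by linarith⟩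
        have key := (keyA hF_mono hFstar h1x h1u (by linarith)).2
        simp only [sub_sub_cancel] at key
        have h2 := abs_nonneg (Fstar u - Fstar x)
        linarith
      · -- u ≤ 1/2 < x
        push_neg at hu2 hx2
        have hu2' : u ≤ 1/2 := le_of_lt hu2
        have hhalf : (1/2 : ℝ) ∈ Set.Icc (0:ℝ) (1/2) := ⟨by norm_num, le_refl _⟩
        have h1x : (1-x) ∈ Set.Icc (0:ℝ) (1/2) := ⟨by linarith [hx.2], by linarith⟩
        have hh1 : (1/2:ℝ) ∈ Set.Icc (0:ℝ) 1 := ⟨by norm_num, by norm_num⟩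
        have h1x1 : (1-x) ∈ Set.Icc (0:ℝ) 1 := ⟨by linarith [hx.2], by linarith [hx.1]⟩
        have h1u1 : (1-u) ∈ Set.Icc (0:ℝ) 1 := ⟨by linarith [hu.2], by linarith [hu.1]⟩
        have mF1 : F u ≤ F (1/2) := hF_mono hu hh1 hu2'
        have mF2 : F (1/2) ≤ F x := hF_mono hh1 hx (le_of_lt hx2)
        have mS1 : Fstar u ≤ Fstar (1/2) := hFstar_mono hu hh1 hu2'
        have mS2 : Fstar (1/2) ≤ Fstar x := hFstar_mono hh1 hx (le_of_lt hx2)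
        have mS3 : Fstar (1-x) ≤ Fstar (1/2) := hFstar_mono h1x1 hh1 (by linarith)
        have mS4 : Fstar (1-x) ≤ Fstar (1-u) := hFstar_mono h1x1 h1u1 (by linarith)
        have mS5 : Fstar (1/2) ≤ Fstar (1-u) := hFstar_mono hh1 h1u1 (by linarith)
        have k1 := (keyA hF_mono hFstar ⟨hu.1, hu2'⟩ hhalf hu2').1
        have k2 := (keyA hF_mono hFstar h1x hhalf (by linarith)).2
        simp only [sub_sub_cancel] at k2
        have hn : (1 - 1/2 : ℝ) = 1/2 := by norm_num
        rw [hn] at k2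
        rw [abs_of_nonneg (by linarith), abs_of_nonneg (by linarith)] at k1
        rw [abs_of_nonpos (by linarith), abs_of_nonneg (by linarith)] at k2
        rw [abs_of_nonpos (by linarith), abs_of_nonpos (by linarith),
          abs_of_nonneg (by linarith)]
        linarith
  intro u hu x hx
  rcases le_total u x with h | h
  · exact main u hu x hx h
  · have key := main x hx u hu h
    rw [abs_sub_comm (F x), abs_sub_comm (Fstar x), abs_sub_comm (Fstar (1-x))] at key
    exact key

lemma F_contOn (hF_mono : MonotoneOn F (Set.Icc 0 1))
    (hFstar : ∀ t, Fstar t = if t ≤ 1 / 2 then F t + 1 - F (1 - t) else 1)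
    (hFstar_cont : ContinuousOn Fstar (Set.Icc 0 1))
    (hFstar_mono : MonotoneOn Fstar (Set.Icc 0 1)) :
    ∀ x ∈ Set.Icc (0:ℝ) 1, ContinuousWithinAt F (Set.Icc 0 1) x := by
  intro x hx
  have hx' : (1-x) ∈ Set.Icc (0:ℝ) 1 := ⟨by linarith [hx.2], by linarith [hx.1]⟩
  have h0 : Tendsto Fstar (nhdsWithin x (Set.Icc 0 1)) (nhds (Fstar x)) := hFstar_cont x hx
  have T1 := (h0.sub (tendsto_const_nhds (x := Fstar x))).abs
  rw [sub_self, abs_zero] at T1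
  have hmaps : Tendsto (fun u : ℝ => 1 - u) (nhdsWithin x (Set.Icc 0 1))
      (nhdsWithin (1-x) (Set.Icc 0 1)) := by
    apply tendsto_nhdsWithin_of_tendsto_nhds_of_eventually_within
    · exact ((continuous_const.sub continuous_id).tendsto x).mono_left nhdsWithin_le_nhds
    · filter_upwards [eventually_mem_nhdsWithin] with u hu
      exact ⟨by linarith [hu.2], by linarith [hu.1]⟩
  have h1 : Tendsto Fstar (nhdsWithin (1-x) (Set.Icc 0 1)) (nhds (Fstar (1-x))) :=
    hFstar_cont (1-x) hx'
  have h2 := Filter.Tendsto.comp h1 hmaps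
  have T2 := (h2.sub (tendsto_const_nhds (x := Fstar (1-x)))).abs
  rw [sub_self, abs_zero] at T2
  have Tsum := T1.add T2
  rw [add_zero] at Tsum
  have Tmain : Tendsto (fun u => |F u - F x|) (nhdsWithin x (Set.Icc 0 1)) (nhds 0) := by
    apply squeeze_zero'
    · filter_upwards with u; exact abs_nonneg _
    · filter_upwards [eventually_mem_nhdsWithin] with u hu
      exact boundA hF_mono hFstar hFstar_mono u hu x hx
    · exact Tsum
  show Tendsto F (nhdsWithin x (Set.Icc 0 1)) (nhds (F x))
  rw [tendsto_iff_dist_tendsto_zero]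
  simp only [Real.dist_eq]
  exact Tmain

lemma F_zero_one (hF_mono : MonotoneOn F (Set.Icc 0 1))
    (hF0 : Tendsto F (nhdsWithin 0 (Set.Ioi 0)) (nhds 0))
    (hF1 : Tendsto F (nhdsWithin 1 (Set.Iio 1)) (nhds 1))
    (hcont : ∀ x ∈ Set.Icc (0:ℝ) 1, ContinuousWithinAt F (Set.Icc 0 1) x) :
    F 0 = 0 ∧ F 1 = 1 := by
  constructor
  · have hne : (nhdsWithin (0:ℝ) (Set.Ioc 0 1)).NeBot := by
      apply mem_closure_iff_nhdsWithin_neBot.1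
      rw [closure_Ioc (by norm_num : (0:ℝ) ≠ 1)]
      exact ⟨le_refl 0, by norm_num⟩
    have A : Tendsto F (nhdsWithin 0 (Set.Ioc 0 1)) (nhds (F 0)) :=
      (hcont 0 ⟨le_refl 0, by norm_num⟩).mono_left
        (nhdsWithin_mono _ Set.Ioc_subset_Icc_self)
    have B : Tendsto F (nhdsWithin 0 (Set.Ioc 0 1)) (nhds 0) :=
      hF0.mono_left (nhdsWithin_mono _ Set.Ioc_subset_Ioi_self)
    exact tendsto_nhds_unique A B
  · have hne : (nhdsWithin (1:ℝ) (Set.Ico 0 1)).NeBot := by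
      apply mem_closure_iff_nhdsWithin_neBot.1
      rw [closure_Ico (by norm_num : (0:ℝ) ≠ 1)]
      exact ⟨by norm_num, le_refl 1⟩
    have A : Tendsto F (nhdsWithin 1 (Set.Ico 0 1)) (nhds (F 1)) :=
      (hcont 1 ⟨by norm_num, le_refl 1⟩).mono_left
        (nhdsWithin_mono _ Set.Ico_subset_Icc_self)
    have B : Tendsto F (nhdsWithin 1 (Set.Ico 0 1)) (nhds 1) :=
      hF1.mono_left (nhdsWithin_mono _ (fun y hy => hy.2))
    exact tendsto_nhds_unique A B
end Fcont


section Qstar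
variable {Fstar Qstar : ℝ → ℝ}

lemma S_compact (hFstar_cont : ContinuousOn Fstar (Set.Icc 0 1)) (q : ℝ) :
    IsCompact {t | t ∈ Set.Icc (0:ℝ) 1 ∧ q ≤ Fstar t} := by
  have hcl : IsClosed (Set.Icc (0:ℝ) 1 ∩ Fstar ⁻¹' (Set.Ici q)) :=
    hFstar_cont.preimage_isClosed_of_isClosed isClosed_Icc isClosed_Ici
  have he : {t | t ∈ Set.Icc (0:ℝ) 1 ∧ q ≤ Fstar t}
      = Set.Icc (0:ℝ) 1 ∩ Fstar ⁻¹' (Set.Ici q) := rfl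
  rw [he]
  exact isCompact_Icc.of_isClosed_subset hcl Set.inter_subset_left

lemma S_nonempty (hS1 : Fstar (1/2) = 1) {q : ℝ} (hq : q ≤ 1) :
    {t | t ∈ Set.Icc (0:ℝ) 1 ∧ q ≤ Fstar t}.Nonempty :=
  ⟨1/2, ⟨by norm_num, by norm_num⟩, by rw [hS1]; exact hq⟩

lemma Q_mem (hFstar_cont : ContinuousOn Fstar (Set.Icc 0 1)) (hS1 : Fstar (1/2) = 1)
    (hQ : ∀ q, Qstar q = sInf {t | t ∈ Set.Icc (0:ℝ) 1 ∧ q ≤ Fstar t})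
    {q : ℝ} (hq : q ≤ 1) :
    Qstar q ∈ Set.Icc (0:ℝ) 1 ∧ q ≤ Fstar (Qstar q) := by
  rw [hQ]
  exact (S_compact hFstar_cont q).sInf_mem (S_nonempty hS1 hq)

lemma Q_le_half (hS1 : Fstar (1/2) = 1)
    (hQ : ∀ q, Qstar q = sInf {t | t ∈ Set.Icc (0:ℝ) 1 ∧ q ≤ Fstar t})
    {q : ℝ} (hq : q ≤ 1) : Qstar q ≤ 1/2 := by
  rw [hQ]
  exact csInf_le ⟨0, fun t ht => ht.1.1⟩ ⟨⟨by norm_num, by norm_num⟩, by rw [hS1]; exact hq⟩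

lemma Q_char (hFstar_cont : ContinuousOn Fstar (Set.Icc 0 1))
    (hFstar_mono : MonotoneOn Fstar (Set.Icc 0 1)) (hS1 : Fstar (1/2) = 1)
    (hQ : ∀ q, Qstar q = sInf {t | t ∈ Set.Icc (0:ℝ) 1 ∧ q ≤ Fstar t})
    {q t : ℝ} (hq : q ≤ 1) (ht : t ∈ Set.Icc (0:ℝ) 1) :
    t < Qstar q ↔ Fstar t < q := by
  constructor
  · intro h
    by_contra hcon
    push_neg at hcon
    have : Qstar q ≤ t := by
      rw [hQ]; exact csInf_le ⟨0, fun s hs => hs.1.1⟩ ⟨ht, hcon⟩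
    linarith
  · intro h
    have hm := Q_mem hFstar_cont hS1 hQ (q := q) hq
    by_contra hcon
    push_neg at hcon
    have := hFstar_mono hm.1 ht hcon
    linarith [hm.2]

lemma Q_mono (hS1 : Fstar (1/2) = 1)
    (hQ : ∀ q, Qstar q = sInf {t | t ∈ Set.Icc (0:ℝ) 1 ∧ q ≤ Fstar t}) :
    MonotoneOn Qstar (Set.Ioc (0:ℝ) 1) := by
  intro q hq q' hq' hqq'
  rw [hQ, hQ]
  apply csInf_le_csInf ⟨0, fun t ht => ht.1.1⟩ (S_nonempty hS1 hq'.2)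
  intro t ht
  exact ⟨ht.1, le_trans hqq' ht.2⟩

lemma integral_Q_eq (hFstar_cont : ContinuousOn Fstar (Set.Icc 0 1))
    (hFstar_mono : MonotoneOn Fstar (Set.Icc 0 1))
    (hS0 : Fstar 0 = 0) (hS1 : Fstar (1/2) = 1)
    (hQ : ∀ q, Qstar q = sInf {t | t ∈ Set.Icc (0:ℝ) 1 ∧ q ≤ Fstar t})
    {β : ℝ} (hβ : β ∈ Set.Ioo (0:ℝ) 1) :
    ∫ q in (0:ℝ)..β, Qstar q
      = ∫ t in Set.Ioo (0:ℝ) (1/2), max (β - Fstar t) 0 := by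
  have hβ1 : β ≤ 1 := le_of_lt hβ.2
  have hSnn : ∀ t ∈ Set.Icc (0:ℝ) 1, 0 ≤ Fstar t := by
    intro t ht
    rw [← hS0]
    exact hFstar_mono ⟨le_refl 0, by norm_num⟩ ht ht.1
  rw [intervalIntegral.integral_of_le (le_of_lt hβ.1)]
  have hmeasιoc : MeasurableSet (Set.Ioc (0:ℝ) β) := measurableSet_Ioc
  have hmono' : MonotoneOn Qstar (Set.Ioc (0:ℝ) β) :=
    (Q_mono hS1 hQ).mono (Set.Ioc_subset_Ioc_right hβ1)
  have hmeasQ : AEMeasurable Qstar (volume.restrict (Set.Ioc 0 β)) :=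
    aemeasurable_restrict_of_monotoneOn hmeasιoc hmono'
  have hbound' : ∀ᵐ q ∂(volume.restrict (Set.Ioc 0 β)), 0 ≤ Qstar q ∧ Qstar q ≤ 1/2 := by
    rw [ae_restrict_iff' hmeasιoc]
    filter_upwards with q hq
    have hq1 : q ≤ 1 := le_trans hq.2 hβ1
    exact ⟨(Q_mem hFstar_cont hS1 hQ hq1).1.1, Q_le_half hS1 hQ hq1⟩
  have hint : Integrable Qstar (volume.restrict (Set.Ioc 0 β)) := by
    refine Integrable.mono' (integrable_const (1/2 : ℝ)) hmeasQ.aestronglyMeasurable ?_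
    filter_upwards [hbound'] with q hq
    rw [Real.norm_eq_abs, abs_of_nonneg hq.1]
    exact hq.2
  have hnn : 0 ≤ᵐ[volume.restrict (Set.Ioc 0 β)] Qstar := by
    filter_upwards [hbound'] with q hq using hq.1
  rw [hint.integral_eq_integral_meas_lt hnn]
  have hptwise : ∀ t ∈ Set.Ioi (0:ℝ),
      ((volume.restrict (Set.Ioc 0 β)) {a | t < Qstar a}).toReal
        = Set.indicator (Set.Ioo (0:ℝ) (1/2)) (fun t => max (β - Fstar t) 0) t := by
    intro t ht
    rw [Measure.restrict_apply' hmeasιoc]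
    by_cases ht2 : t < 1/2
    · have htm : t ∈ Set.Icc (0:ℝ) 1 := ⟨le_of_lt ht, by linarith⟩
      have hset : {a | t < Qstar a} ∩ Set.Ioc 0 β = Set.Ioc (Fstar t) β := by
        ext a
        simp only [Set.mem_inter_iff, Set.mem_setOf_eq, Set.mem_Ioc]
        constructor
        · rintro ⟨h1, h2, h3⟩
          have := (Q_char hFstar_cont hFstar_mono hS1 hQ (le_trans h3 hβ1) htm).1 h1
          exact ⟨this, h3⟩
        · rintro ⟨h1, h2⟩
          have ha0 : 0 < a := lt_of_le_of_lt (hSnn t htm) h1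
          exact ⟨(Q_char hFstar_cont hFstar_mono hS1 hQ (le_trans h2 hβ1) htm).2 h1,
            ha0, h2⟩
      rw [hset, Real.volume_Ioc, ENNReal.toReal_ofReal',
        Set.indicator_of_mem (Set.mem_Ioo.2 ⟨ht, ht2⟩)]
    · have hset : {a | t < Qstar a} ∩ Set.Ioc 0 β = ∅ := by
        ext a
        simp only [Set.mem_inter_iff, Set.mem_setOf_eq, Set.mem_Ioc, Set.mem_empty_iff_false,
          iff_false, not_and]
        rintro h1 h2 h3
        push_neg at ht2
        have := Q_le_half hS1 hQ (q := a) (le_trans h3 hβ1)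
        linarith
      rw [hset, measure_empty, ENNReal.toReal_zero]
      have hnm : t ∉ Set.Ioo (0:ℝ) (1/2) := by
        intro hmem; exact ht2 hmem.2
      exact (Set.indicator_of_notMem hnm _).symm
  rw [setIntegral_congr_fun measurableSet_Ioi (fun t ht => (measureReal_def _ _).trans (hptwise t ht))]
  rw [integral_indicator measurableSet_Ioo, Measure.restrict_restrict measurableSet_Ioo]
  have hss : Set.Ioo (0:ℝ) (1/2) ∩ Set.Ioi 0 = Set.Ioo (0:ℝ) (1/2) := by
    apply Set.inter_eq_left.2
    intro x hx
    exact hx.1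
  rw [hss]
end Qstar


section Var
variable {Ω : Type*} [MeasurableSpace Ω] {μ : Measure Ω} [IsProbabilityMeasure μ]

lemma bern_integrable' {Y : Ω → ℝ} (hm : Measurable Y) (hval : ∀ ω, Y ω = 0 ∨ Y ω = 1) :
    Integrable Y μ := by
  refine (integrable_const (1:ℝ)).mono' hm.aestronglyMeasurable ?_
  filter_upwards with ω
  rcases hval ω with h | h <;> simp [h]

lemma var_bound (k d : ℕ) (hk : k ≤ d) (hd : 0 < d)
    (Y : ℕ → Ω → ℝ) (q : ℕ → ℝ)
    (hmeas : ∀ j, j < k → Measurable (Y j))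
    (hval : ∀ j, j < k → ∀ ω, Y j ω = 0 ∨ Y j ω = 1)
    (hq : ∀ j, j < k → q j ∈ Set.Icc (0:ℝ) 1)
    (hmean : ∀ j, j < k → ∫ ω, Y j ω ∂μ = q j)
    (hvar : ∀ j, j < k → ∫ ω, (Y j ω - q j)^2 ∂μ = q j * (1 - q j))
    (hind : ∀ j j', j < k → j' < k → j ≠ j' → IndepFun (Y j) (Y j') μ) :
    ∫ ω, ((1/(d:ℝ)) * (∑ j ∈ Finset.range k, Y j ω)
        - (1/(d:ℝ)) * ∑ j ∈ Finset.range k, q j)^2 ∂μ ≤ 1/(4*(d:ℝ)) := by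
  have hd0 : (0:ℝ) < d := by exact_mod_cast hd
  have hZm : ∀ j, j < k → Measurable (fun ω => Y j ω - q j) :=
    fun j hj => (hmeas j hj).sub measurable_const
  have hZb : ∀ j, j < k → ∀ ω, |Y j ω - q j| ≤ 1 := by
    intro j hj ω
    rcases hval j hj ω with h | h <;> rw [h] <;> rw [abs_le] <;>
      constructor <;> linarith [(hq j hj).1, (hq j hj).2]
  have hZint : ∀ j, j < k → Integrable (fun ω => Y j ω - q j) μ :=
    fun j hj => (bern_integrable' (hmeas j hj) (hval j hj)).sub (integrable_const _)
  have hZzero : ∀ j, j < k → ∫ ω, (Y j ω - q j) ∂μ = 0 := by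
    intro j hj
    rw [integral_sub (bern_integrable' (hmeas j hj) (hval j hj)) (integrable_const _),
      hmean j hj, integral_const]
    simp
  have hprod_int : ∀ j j', j < k → j' < k →
      Integrable (fun ω => (Y j ω - q j) * (Y j' ω - q j')) μ := by
    intro j j' hj hj'
    refine (integrable_const (1:ℝ)).mono'
      ((hZm j hj).mul (hZm j' hj')).aestronglyMeasurable ?_
    filter_upwards with ω
    rw [Real.norm_eq_abs, abs_mul]
    calc |Y j ω - q j| * |Y j' ω - q j'| ≤ 1 * 1 :=
          mul_le_mul (hZb j hj ω) (hZb j' hj' ω) (abs_nonneg _) zero_le_one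
      _ = 1 := by ring
  have hfun : ∀ ω, ((1/(d:ℝ)) * (∑ j ∈ Finset.range k, Y j ω)
      - (1/(d:ℝ)) * ∑ j ∈ Finset.range k, q j)^2
      = (1/(d:ℝ))^2 * ∑ j ∈ Finset.range k, ∑ j' ∈ Finset.range k,
          (Y j ω - q j) * (Y j' ω - q j') := by
    intro ω
    rw [← Finset.sum_mul_sum, Finset.sum_sub_distrib]
    ring
  simp_rw [hfun]
  rw [MeasureTheory.integral_const_mul]
  have hintsum : ∫ ω, (∑ j ∈ Finset.range k, ∑ j' ∈ Finset.range k,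
      (Y j ω - q j) * (Y j' ω - q j')) ∂μ
      = ∑ j ∈ Finset.range k, ∑ j' ∈ Finset.range k,
          ∫ ω, (Y j ω - q j) * (Y j' ω - q j') ∂μ := by
    rw [integral_finset_sum]
    · refine Finset.sum_congr rfl (fun j hj => ?_)
      rw [integral_finset_sum]
      intro j' hj'
      exact hprod_int j j' (Finset.mem_range.1 hj) (Finset.mem_range.1 hj')
    · intro j hj
      apply integrable_finset_sum
      intro j' hj'
      exact hprod_int j j' (Finset.mem_range.1 hj) (Finset.mem_range.1 hj')
  rw [hintsum]
  have hterm : ∀ j ∈ Finset.range k, ∑ j' ∈ Finset.range k,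
      ∫ ω, (Y j ω - q j) * (Y j' ω - q j') ∂μ ≤ 1/4 := by
    intro j hj
    have hjk := Finset.mem_range.1 hj
    have hsingle : ∑ j' ∈ Finset.range k,
        ∫ ω, (Y j ω - q j) * (Y j' ω - q j') ∂μ
        = ∫ ω, (Y j ω - q j) * (Y j ω - q j) ∂μ := by
      apply Finset.sum_eq_single_of_mem j hj
      intro j' hj' hne
      have hjk' := Finset.mem_range.1 hj'
      have hindZ : IndepFun (fun ω => Y j ω - q j) (fun ω => Y j' ω - q j') μ := by
        have := (hind j j' hjk hjk' (Ne.symm hne)).comp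
          (measurable_id.sub_const (q j)) (measurable_id.sub_const (q j'))
        exact this
      have := IndepFun.integral_mul_eq_mul_integral hindZ (hZint j hjk).aestronglyMeasurable (hZint j' hjk').aestronglyMeasurable
      calc ∫ ω, (Y j ω - q j) * (Y j' ω - q j') ∂μ
          = (∫ ω, (Y j ω - q j) ∂μ) * ∫ ω, (Y j' ω - q j') ∂μ := this
        _ = 0 := by rw [hZzero j hjk, hZzero j' hjk', mul_zero]
    rw [hsingle]
    have : ∫ ω, (Y j ω - q j) * (Y j ω - q j) ∂μ = q j * (1 - q j) := by
      rw [← hvar j hjk]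
      congr 1
      funext ω
      ring
    rw [this]
    nlinarith [(hq j hjk).1, (hq j hjk).2, sq_nonneg (q j - 1/2)]
  calc (1/(d:ℝ))^2 * ∑ j ∈ Finset.range k, ∑ j' ∈ Finset.range k,
      ∫ ω, (Y j ω - q j) * (Y j' ω - q j') ∂μ
      ≤ (1/(d:ℝ))^2 * ∑ j ∈ Finset.range k, (1/4 : ℝ) := by
        apply mul_le_mul_of_nonneg_left (Finset.sum_le_sum hterm) (by positivity)
    _ = (1/(d:ℝ))^2 * (k * (1/4)) := by rw [Finset.sum_const, Finset.card_range]; simp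
    _ ≤ (1/(d:ℝ))^2 * (d * (1/4)) := by
        apply mul_le_mul_of_nonneg_left _ (by positivity)
        have : (k:ℝ) ≤ (d:ℝ) := by exact_mod_cast hk
        linarith
    _ = 1/(4*(d:ℝ)) := by field_simp
end Var

theorem stmt_9
    -- the triangular array of independent Bernoulli random variables
    {Ω : ℕ → Type*} [∀ d, MeasurableSpace (Ω d)]
    (μ : ∀ d, Measure (Ω d)) [∀ d, IsProbabilityMeasure (μ d)]
    (p : ℕ → ℕ → ℝ) (hp : ∀ d i, i < d → p d i ∈ Set.Icc (0 : ℝ) 1)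
    (X : ∀ d, ℕ → Ω d → ℝ)
    (hmeas : ∀ d i, Measurable (X d i))
    (hval : ∀ d i ω, X d i ω = 0 ∨ X d i ω = 1)
    (hbern : ∀ d i, i < d → μ d {ω | X d i ω = 1} = ENNReal.ofReal (p d i))
    (hindep : ∀ d, iIndepFun
      (fun i : Fin d => X d (i : ℕ)) (μ d))
    -- transformed quantities
    (pstar : ℕ → ℕ → ℝ)
    (hpstar : ∀ d i, pstar d i = min (p d i) (1 - p d i))
    (Xstar : ∀ d, ℕ → Ω d → ℝ)
    (hXstar : ∀ d i ω,
      Xstar d i ω = if p d i ≤ 1 / 2 then X d i ω else 1 - X d i ω)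
    -- an ordering of {0,…,d−1} making `pstar` nondecreasing
    (ord : ℕ → ℕ → ℕ)
    (hord_bij : ∀ d, Set.BijOn (ord d) (Set.Iio d) (Set.Iio d))
    (hord_mono : ∀ d j j', j ≤ j' → j' < d →
      pstar d (ord d j) ≤ pstar d (ord d j'))
    -- the stability assumption
    (F : ℝ → ℝ)
    (hF_mono : MonotoneOn F (Set.Icc 0 1))
    (hF_rc : ∀ t ∈ Set.Ico (0 : ℝ) 1,
      Tendsto F (nhdsWithin t (Set.Ioi t)) (nhds (F t)))
    (hF0 : Tendsto F (nhdsWithin 0 (Set.Ioi 0)) (nhds 0))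
    (hF1 : Tendsto F (nhdsWithin 1 (Set.Iio 1)) (nhds 1))
    (hstab : ∀ t ∈ Set.Icc (0 : ℝ) 1, ContinuousWithinAt F (Set.Icc 0 1) t →
      Tendsto (fun d : ℕ => (1 / (d : ℝ)) *
          ∑ i ∈ Finset.range d, (if p d i ≤ t then (1 : ℝ) else 0))
        atTop (nhds (F t)))
    -- the transformed cdf and its quantile function
    (Fstar : ℝ → ℝ)
    (hFstar : ∀ t, Fstar t = if t ≤ 1 / 2 then F t + 1 - F (1 - t) else 1)
    (hFstar_cont : ContinuousOn Fstar (Set.Icc 0 1))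
    (hFstar_mono : MonotoneOn Fstar (Set.Icc 0 1))
    (Qstar : ℝ → ℝ)
    (hQ : ∀ q, Qstar q = sInf {t | t ∈ Set.Icc (0 : ℝ) 1 ∧ q ≤ Fstar t})
    (β : ℝ) (hβ : β ∈ Set.Ioo (0 : ℝ) 1) :
    -- the mean of α̂_d(β) …
    (∀ d : ℕ,
      (∫ ω, (1 / (d : ℝ)) * ∑ j ∈ Finset.range (Nat.floor (β * d)),
          Xstar d (ord d j) ω ∂(μ d))
        = (1 / (d : ℝ)) * ∑ j ∈ Finset.range (Nat.floor (β * d)),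
            pstar d (ord d j)) ∧
    -- … converges to the limiting integral …
    Tendsto (fun d : ℕ => (1 / (d : ℝ)) *
        ∑ j ∈ Finset.range (Nat.floor (β * d)), pstar d (ord d j))
      atTop (nhds (∫ q in (0 : ℝ)..β, Qstar q)) ∧
    -- … the variance of α̂_d(β) is at most 1/(4d) …
    (∀ d : ℕ, 0 < d →
      (∫ ω, ((1 / (d : ℝ)) * (∑ j ∈ Finset.range (Nat.floor (β * d)),
              Xstar d (ord d j) ω)
          - (1 / (d : ℝ)) * ∑ j ∈ Finset.range (Nat.floor (β * d)),
              pstar d (ord d j)) ^ 2 ∂(μ d))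
        ≤ 1 / (4 * (d : ℝ))) ∧
    -- … and α̂_d(β) converges in probability to ∫_0^β Q*(q) dq
    (∀ ε : ℝ, 0 < ε →
      Tendsto (fun d : ℕ =>
          (μ d {ω | ε ≤ |(1 / (d : ℝ)) * (∑ j ∈ Finset.range (Nat.floor (β * d)),
              Xstar d (ord d j) ω) - ∫ q in (0 : ℝ)..β, Qstar q|}).toReal)
        atTop (nhds 0)) := by
  have hcont : ∀ x ∈ Set.Icc (0:ℝ) 1, ContinuousWithinAt F (Set.Icc 0 1) x :=
    F_contOn hF_mono hFstar hFstar_cont hFstar_mono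
  obtain ⟨hF0', hF1'⟩ := F_zero_one hF_mono hF0 hF1 hcont
  have hS0 : Fstar 0 = 0 := by rw [hFstar]; norm_num [hF0', hF1']
  have hS1 : Fstar (1/2) = 1 := by rw [hFstar]; norm_num
  have H : ∀ u ∈ Set.Icc (0:ℝ) 1, Tendsto (fun d : ℕ => (1 / (d : ℝ)) *
      ∑ i ∈ Finset.range d, (if p d i ≤ u then (1 : ℝ) else 0)) atTop (nhds (F u)) :=
    fun u hu => hstab u hu (hcont u hu)
  have hXfun : ∀ d i, Xstar d i = fun ω => if p d i ≤ 1/2 then X d i ω else 1 - X d i ω :=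
    fun d i => funext (hXstar d i)
  have hXm : ∀ d i, Measurable (Xstar d i) := by
    intro d i; rw [hXfun]; exact star_meas (hmeas d i) _
  have hXv : ∀ d i ω, Xstar d i ω = 0 ∨ Xstar d i ω = 1 := by
    intro d i ω; rw [hXstar d i ω]; exact star_val (hval d i) _ ω
  have hXmeasure : ∀ d i, i < d → μ d {ω | Xstar d i ω = 1} = ENNReal.ofReal (pstar d i) := by
    intro d i hi
    rw [hXfun d i, hpstar d i]
    exact star_measure (hmeas d i) (hval d i) (hp d i hi) (hbern d i hi)
  have hps_mem : ∀ d i, i < d → pstar d i ∈ Set.Icc (0:ℝ) (1/2) := by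
    intro d i hi
    have hpi := hp d i hi
    rw [hpstar]
    refine ⟨le_min hpi.1 (by linarith [hpi.2]), ?_⟩
    rcases le_total (p d i) (1/2) with h | h
    · exact le_trans (min_le_left _ _) h
    · exact le_trans (min_le_right _ _) (by linarith)
  have hkd : ∀ d : ℕ, Nat.floor (β * d) ≤ d := by
    intro d
    have h1 : β * (d:ℝ) ≤ (d:ℝ) := by
      nlinarith [Nat.cast_nonneg (α := ℝ) d, hβ.1, hβ.2]
    calc Nat.floor (β * (d:ℝ)) ≤ Nat.floor ((d:ℝ)) := Nat.floor_le_floor h1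
      _ = d := Nat.floor_natCast d
  have hordlt : ∀ d j, j < d → ord d j < d := fun d j hj => (hord_bij d).mapsTo hj
  -- Part 1 : the mean
  have part1 : ∀ d : ℕ,
      (∫ ω, (1 / (d : ℝ)) * ∑ j ∈ Finset.range (Nat.floor (β * d)),
          Xstar d (ord d j) ω ∂(μ d))
        = (1 / (d : ℝ)) * ∑ j ∈ Finset.range (Nat.floor (β * d)),
            pstar d (ord d j) := by
    intro d
    rw [MeasureTheory.integral_const_mul]
    congr 1
    rw [integral_finset_sum _ (fun j _ => bern_integrable (hXm d _) (hXv d _))]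
    refine Finset.sum_congr rfl (fun j hj => ?_)
    have hjd : ord d j < d := hordlt d j (lt_of_lt_of_le (Finset.mem_range.1 hj) (hkd d))
    exact bern_integral (hXm d _) (hXv d _) (hps_mem d _ hjd).1 (hXmeasure d _ hjd)
  -- Part 2 : convergence of the means
  have part2 : Tendsto (fun d : ℕ => (1 / (d : ℝ)) *
      ∑ j ∈ Finset.range (Nat.floor (β * d)), pstar d (ord d j))
      atTop (nhds (∫ q in (0 : ℝ)..β, Qstar q)) := by
    rw [integral_Q_eq hFstar_cont hFstar_mono hS0 hS1 hQ hβ]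
    exact mean_conv p hp pstar hpstar ord hord_bij hord_mono F hF_mono H hcont
      Fstar hFstar β hβ
  -- Part 3 : the variance bound
  have part3 : ∀ d : ℕ, 0 < d →
      (∫ ω, ((1 / (d : ℝ)) * (∑ j ∈ Finset.range (Nat.floor (β * d)),
              Xstar d (ord d j) ω)
          - (1 / (d : ℝ)) * ∑ j ∈ Finset.range (Nat.floor (β * d)),
              pstar d (ord d j)) ^ 2 ∂(μ d))
        ≤ 1 / (4 * (d : ℝ)) := by
    intro d hd
    apply var_bound (Nat.floor (β * d)) d (hkd d) hd
      (fun j => Xstar d (ord d j)) (fun j => pstar d (ord d j))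
    · intro j hj; exact hXm d _
    · intro j hj; exact hXv d _
    · intro j hj
      have hjd := hordlt d j (lt_of_lt_of_le hj (hkd d))
      exact ⟨(hps_mem d _ hjd).1, by linarith [(hps_mem d _ hjd).2]⟩
    · intro j hj
      have hjd := hordlt d j (lt_of_lt_of_le hj (hkd d))
      exact bern_integral (hXm d _) (hXv d _) (hps_mem d _ hjd).1 (hXmeasure d _ hjd)
    · intro j hj
      have hjd := hordlt d j (lt_of_lt_of_le hj (hkd d))
      exact bern_var (hXm d _) (hXv d _) (hps_mem d _ hjd).1 (hXmeasure d _ hjd)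
    · intro j j' hj hj' hne
      have hjd := hordlt d j (lt_of_lt_of_le hj (hkd d))
      have hjd' := hordlt d j' (lt_of_lt_of_le hj' (hkd d))
      have hone : ord d j ≠ ord d j' := by
        intro hcon
        exact hne ((hord_bij d).injOn (lt_of_lt_of_le hj (hkd d))
          (lt_of_lt_of_le hj' (hkd d)) hcon)
      have hI : IndepFun (X d (ord d j)) (X d (ord d j')) (μ d) :=
        (hindep d).indepFun (i := ⟨ord d j, hjd⟩) (j := ⟨ord d j', hjd'⟩)
          (fun hcon => hone (congrArg Fin.val hcon))
      have hφm : ∀ i : ℕ, Measurable (fun x : ℝ => if p d i ≤ 1/2 then x else 1 - x) := by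
        intro i
        by_cases h : p d i ≤ 1/2 <;> simp only [h, if_true, if_false]
        · exact measurable_id
        · exact measurable_const.sub measurable_id
      have hcomp := hI.comp (hφm (ord d j)) (hφm (ord d j'))
      have heq : ∀ i, (fun x : ℝ => if p d i ≤ 1/2 then x else 1-x) ∘ (X d i)
          = Xstar d i := by
        intro i; funext ω
        simp only [Function.comp]
        rw [hXstar d i ω]
      rw [heq (ord d j), heq (ord d j')] at hcomp
      exact hcomp
  refine ⟨part1, part2, part3, ?_⟩
  -- Part 4 : convergence in probability
  intro ε hε
  set L := ∫ q in (0 : ℝ)..β, Qstar q with hLdef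
  apply squeeze_zero' (g := fun d : ℕ => (1/(4*(d:ℝ))) / ((ε/2)^2))
  · filter_upwards with d; exact ENNReal.toReal_nonneg
  · filter_upwards [part2 (Metric.ball_mem_nhds L (by linarith : (0:ℝ) < ε/2)),
      eventually_ge_atTop 1] with d hd1 hd2
    have hd0 : 0 < d := hd2
    set k := Nat.floor (β * (d:ℝ)) with hkdef
    set m := (1/(d:ℝ)) * ∑ j ∈ Finset.range k, pstar d (ord d j) with hmdef
    have hdist : |m - L| < ε/2 := by
      have h := Metric.mem_ball.1 hd1
      rw [Real.dist_eq] at h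
      exact h
    set A : Ω d → ℝ := fun ω => (1/(d:ℝ)) * ∑ j ∈ Finset.range k, Xstar d (ord d j) ω
      with hAdef
    have hgoal_eq : {ω | ε ≤ |(1 / (d : ℝ)) * (∑ j ∈ Finset.range k,
        Xstar d (ord d j) ω) - L|} = {ω | ε ≤ |A ω - L|} := rfl
    rw [hgoal_eq]
    have hsub : {ω | ε ≤ |A ω - L|} ⊆ {ω | (ε/2)^2 ≤ (A ω - m)^2} := by
      intro ω hω
      simp only [Set.mem_setOf_eq] at hω ⊢
      have htr := abs_sub_le (A ω) m L
      have h1 : ε/2 ≤ |A ω - m| := by linarith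
      calc (ε/2)^2 ≤ |A ω - m|^2 := pow_le_pow_left₀ (by linarith) h1 2
        _ = (A ω - m)^2 := sq_abs _
    have hAm : Measurable fun ω => (A ω - m)^2 := by
      apply Measurable.pow_const
      apply Measurable.sub_const
      apply Measurable.const_mul
      exact Finset.measurable_sum _ (fun j _ => hXm d _)
    have hbnd : ∀ ω, (A ω - m)^2 ≤ ((k:ℝ) + |m|)^2 := by
      intro ω
      have hSnn : (0:ℝ) ≤ ∑ j ∈ Finset.range k, Xstar d (ord d j) ω := by
        apply Finset.sum_nonneg
        intro j _
        rcases hXv d (ord d j) ω with h | h <;> rw [h] <;> norm_num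
      have hSub : ∑ j ∈ Finset.range k, Xstar d (ord d j) ω ≤ (k:ℝ) := by
        calc _ ≤ ∑ j ∈ Finset.range k, (1:ℝ) := Finset.sum_le_sum (fun j _ => by
              rcases hXv d (ord d j) ω with h | h <;> rw [h] <;> norm_num)
          _ = (k:ℝ) := by simp
      have hA0 : 0 ≤ A ω := mul_nonneg (by positivity) hSnn
      have hA1 : A ω ≤ (k:ℝ) := by
        have hle1 : (1:ℝ)/(d:ℝ) ≤ 1 := by
          have : (1:ℝ) ≤ (d:ℝ) := by exact_mod_cast hd0
          rw [div_le_one (by linarith)]; linarith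
        calc A ω ≤ 1 * ∑ j ∈ Finset.range k, Xstar d (ord d j) ω :=
              mul_le_mul_of_nonneg_right hle1 hSnn
          _ = ∑ j ∈ Finset.range k, Xstar d (ord d j) ω := one_mul _
          _ ≤ (k:ℝ) := hSub
      have habs2 : |A ω - m| ≤ (k:ℝ) + |m| := by
        calc |A ω - m| ≤ |A ω| + |m| := abs_sub (A ω) m
          _ ≤ (k:ℝ) + |m| := by rw [abs_of_nonneg hA0]; linarith
      calc (A ω - m)^2 = |A ω - m|^2 := (sq_abs _).symm
        _ ≤ ((k:ℝ) + |m|)^2 := pow_le_pow_left₀ (abs_nonneg _) habs2 2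
    have hint : Integrable (fun ω => (A ω - m)^2) (μ d) := by
      refine (integrable_const (((k:ℝ) + |m|)^2)).mono' hAm.aestronglyMeasurable ?_
      filter_upwards with ω
      rw [Real.norm_eq_abs, abs_of_nonneg (sq_nonneg _)]
      exact hbnd ω
    have hcheb := mul_meas_ge_le_integral_of_nonneg
      (Filter.Eventually.of_forall (fun ω => sq_nonneg (A ω - m))) hint ((ε/2)^2)
    have hvar : ∫ ω, (A ω - m)^2 ∂(μ d) ≤ 1/(4*(d:ℝ)) := part3 d hd0
    have hε2 : (0:ℝ) < (ε/2)^2 := by positivity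
    have hμ1 : (μ d {ω | ε ≤ |A ω - L|}).toReal
        ≤ (μ d {ω | (ε/2)^2 ≤ (A ω - m)^2}).toReal :=
      ENNReal.toReal_mono (measure_ne_top _ _) (measure_mono hsub)
    have hμ2 : (μ d {ω | (ε/2)^2 ≤ (A ω - m)^2}).toReal ≤ (1/(4*(d:ℝ))) / ((ε/2)^2) := by
      rw [le_div_iff₀ hε2]
      calc (μ d {ω | (ε/2)^2 ≤ (A ω - m)^2}).toReal * (ε/2)^2
          = (ε/2)^2 * (μ d {ω | (ε/2)^2 ≤ (A ω - m)^2}).toReal := by ring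
        _ ≤ ∫ ω, (A ω - m)^2 ∂(μ d) := hcheb
        _ ≤ 1/(4*(d:ℝ)) := hvar
    exact le_trans hμ1 hμ2
  · have h1 : Tendsto (fun d : ℕ => 1/(4*(d:ℝ))) atTop (nhds 0) := by
      have he : (fun d : ℕ => 1/(4*(d:ℝ))) = fun d : ℕ => ((1:ℝ)/4)/(d:ℝ) := by
        funext d; rw [div_mul_eq_div_div]
      rw [he]
      exact tendsto_const_div_atTop_nhds_zero_nat (1/4)
    have h2 := h1.div_const ((ε/2)^2)
    simpa using h2
end

section
/- Let B ≥ 1 be an odd integer and let X = (X₁, X₂) be uniform on {0,1} × {0,B}. Define the policy σ^S(x) = {1} if x₁ + x₂ is odd and σ^S(x) = {2} otherwise. Then: (i) σ^S is fully revealing for a sophisticated agent, i.e., the map x ↦ (σ^S(x), x_{σ^S(x)}) is injective on the support, so R^S(σ^S) = 0; (ii) the naive risk of σ^S is R^N(σ^S) = B²/8 + 1/8; (iii) every highlighting policy revealing at most one coordinate has naive risk at least 1/4, with the constant policy σ^N ≡ {2} attaining naive risk exactly 1/4; hence the price of complexity is Δ^N = R^N(σ^S) − R^N(σ^N) = (B²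 − 1)/8. -/
/-!
Statement 16: For `B ≥ 1` odd and `X` uniform on `{0,1} × {0,B}`, the parity
policy `σ^S` (reveal coordinate 1 iff `x₁ + x₂` is odd) is fully revealing for
a sophisticated agent (so `R^S(σ^S) = 0`), its naive risk is `B²/8 + 1/8`,
every policy revealing at most one coordinate has naive risk at least `1/4`
(attained by the constant policy revealing coordinate 2), and hence the price
of complexity is `Δ^N = (B² − 1)/8`.
-/

open Finset
open scoped Classical

noncomputable section

/-- The support of the uniform prior: the four states of `{0,1} × {0,B}`. -/
def supp16 (B : ℝ) : Finset (ℝ × ℝ) := {(0, 0), (0, B), (1, 0), (1, B)}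

/-- Coordinates of an instance. -/
def coord16 (j : Fin 2) (x : ℝ × ℝ) : ℝ := if j = 0 then x.1 else x.2

/-- The signal `(I, x_I)` sent by a policy at instance `x` (unrevealed
coordinates are zeroed out; the index set is part of the signal). -/
def sig16 (pol : ℝ × ℝ → Finset (Fin 2)) (x : ℝ × ℝ) :
    Finset (Fin 2) × (Fin 2 → ℝ) :=
  (pol x, fun j => if j ∈ pol x then coord16 j x else 0)

/-- Naive conditional mean `E[X_j | X_I = x_I]` under the uniform prior on
`supp16 B`. -/
def condMean16 (B : ℝ) (I : Finset (Fin 2)) (x : ℝ × ℝ) (j : Fin 2) : ℝ :=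
  (∑ y ∈ (supp16 B).filter (fun y => ∀ i ∈ I, coord16 i y = coord16 i x),
      coord16 j y) /
    (((supp16 B).filter (fun y => ∀ i ∈ I, coord16 i y = coord16 i x)).card : ℝ)

/-- Naive prediction: revealed coordinates at face value, unrevealed ones by
their conditional mean given only the revealed values. -/
def predN16 (B : ℝ) (pol : ℝ × ℝ → Finset (Fin 2)) (x : ℝ × ℝ) (j : Fin 2) : ℝ :=
  if j ∈ pol x then coord16 j x else condMean16 B (pol x) x j

/-- Expected naive loss (squared recovery) under the uniform prior. -/
def RN16 (B : ℝ) (pol : ℝ × ℝ → Finset (Fin 2)) : ℝ :=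
  (1 / 4) * ∑ x ∈ supp16 B, ∑ j : Fin 2, (coord16 j x - predN16 B pol x j) ^ 2

/-- Sophisticated prediction: the posterior mean over states producing the
same signal (conditioning on the selection event `σ(X) = I` as well as the
revealed values). -/
def predS16 (B : ℝ) (pol : ℝ × ℝ → Finset (Fin 2)) (x : ℝ × ℝ) (j : Fin 2) : ℝ :=
  (∑ y ∈ (supp16 B).filter (fun y => sig16 pol y = sig16 pol x), coord16 j y) /
    (((supp16 B).filter (fun y => sig16 pol y = sig16 pol x)).card : ℝ)

/-- Expected sophisticated loss (squared recovery) under the uniform prior. -/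
def RS16 (B : ℝ) (pol : ℝ × ℝ → Finset (Fin 2)) : ℝ :=
  (1 / 4) * ∑ x ∈ supp16 B, ∑ j : Fin 2, (coord16 j x - predS16 B pol x j) ^ 2

/-- The parity policy: reveal coordinate 1 if `x₁ + x₂` is odd, else
coordinate 2. -/
def sophPol16 (x : ℝ × ℝ) : Finset (Fin 2) :=
  if ∃ m : ℤ, x.1 + x.2 = 2 * (m : ℝ) + 1 then {0} else {1}


section Aux16

lemma supp_sum16 {B : ℝ} (hB : B ≠ 0) (f : ℝ × ℝ → ℝ) :
    ∑ x ∈ supp16 B, f x = f (0,0) + f (0,B) + f (1,0) + f (1,B) := by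
  unfold supp16
  rw [Finset.sum_insert (by simp [Prod.ext_iff, Ne.symm hB]),
      Finset.sum_insert (by simp [Prod.ext_iff]),
      Finset.sum_insert (by simp [Prod.ext_iff, Ne.symm hB]),
      Finset.sum_singleton]
  ring

lemma soph00_16 : sophPol16 ((0:ℝ),(0:ℝ)) = {1} := by
  unfold sophPol16
  rw [if_neg]
  rintro ⟨m, hm⟩
  norm_num at hm
  have : (0:ℤ) = 2*m+1 := by exact_mod_cast hm
  omega

lemma soph00_16' : sophPol16 (0 : ℝ × ℝ) = {1} := soph00_16

lemma soph10_16 : sophPol16 ((1:ℝ),(0:ℝ)) = {0} := by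
  unfold sophPol16
  rw [if_pos ⟨0, by norm_num⟩]

lemma soph0B_16 {b : ℤ} (hodd : Odd b) : sophPol16 ((0:ℝ),(b:ℝ)) = {0} := by
  obtain ⟨k, hk⟩ := hodd
  unfold sophPol16
  rw [if_pos ⟨k, by push_cast [hk]; ring⟩]

lemma soph1B_16 {b : ℤ} (hodd : Odd b) : sophPol16 ((1:ℝ),(b:ℝ)) = {1} := by
  unfold sophPol16
  rw [if_neg]
  rintro ⟨m, hm⟩
  norm_num at hm
  have : (b:ℝ) = 2*m := by linarith
  have hb2 : b = 2*m := by exact_mod_cast this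
  obtain ⟨k, hk⟩ := hodd
  omega

end Aux16

set_option maxHeartbeats 4000000 in
theorem stmt_16 (b : ℤ) (hodd : Odd b) (hb : 1 ≤ b) :
    -- (i) fully revealing for a sophisticated agent, hence zero risk
    Set.InjOn (sig16 sophPol16) ↑(supp16 (b : ℝ)) ∧
    RS16 (b : ℝ) sophPol16 = 0 ∧
    -- (ii) naive risk of the parity policy
    RN16 (b : ℝ) sophPol16 = (b : ℝ) ^ 2 / 8 + 1 / 8 ∧
    -- (iii) every policy revealing at most one coordinate has naive risk ≥ 1/4,
    -- attained by the constant policy revealing coordinate 2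
    (∀ pol : ℝ × ℝ → Finset (Fin 2), (∀ x, (pol x).card ≤ 1) →
      1 / 4 ≤ RN16 (b : ℝ) pol) ∧
    RN16 (b : ℝ) (fun _ => {1}) = 1 / 4 ∧
    RN16 (b : ℝ) sophPol16 - RN16 (b : ℝ) (fun _ => {1})
      = ((b : ℝ) ^ 2 - 1) / 8 := by
  have hb1 : (1:ℝ) ≤ (b:ℝ) := by exact_mod_cast hb
  have hB : (b:ℝ) ≠ 0 := by linarith
  have hInj : Set.InjOn (sig16 sophPol16) ↑(supp16 (b : ℝ)) := by
    intro x hx y hy h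
    simp only [Finset.coe_insert, Finset.coe_singleton, Set.mem_insert_iff,
      Set.mem_singleton_iff, supp16] at hx hy
    rcases hx with h1|h1|h1|h1 <;> rcases hy with h2|h2|h2|h2 <;> subst h1 <;> subst h2 <;>
      first
        | rfl
        | (exfalso
           simp only [sig16, soph00_16, soph10_16, soph0B_16 hodd, soph1B_16 hodd,
             Prod.mk.injEq, Finset.singleton_injective.eq_iff] at h
           first
             | (exact absurd h.1 (by decide))
             | (have h0 := congrFun h.2 0
                have h1 := congrFun h.2 1
                simp only [coord16] at h0 h1
                (try norm_num at h0) <;> (try norm_num at h1) <;>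
                first | omega | exact hB h1.symm | exact hB h0.symm | exact hB h1 | exact hB h0))
  have hRS : RS16 (b : ℝ) sophPol16 = 0 := by
    unfold RS16
    rw [supp_sum16 hB]
    norm_num [Fin.sum_univ_two, predS16, sig16, soph00_16, soph00_16', soph10_16,
      soph0B_16 hodd, soph1B_16 hodd, supp16, coord16, Finset.filter_insert,
      Finset.filter_singleton, funext_iff, Fin.forall_fin_two, Prod.ext_iff, hB,
      Ne.symm hB, Finset.sum_insert, Finset.singleton_inj]
  have hRNsoph : RN16 (b : ℝ) sophPol16 = (b : ℝ) ^ 2 / 8 + 1 / 8 := by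
    unfold RN16
    rw [supp_sum16 hB]
    simp only [Fin.sum_univ_two, predN16, soph00_16, soph10_16, soph0B_16 hodd,
      soph1B_16 hodd]
    norm_num [condMean16, supp16, coord16, Finset.filter_insert, Finset.filter_singleton,
      Finset.sum_insert, Finset.mem_insert, Finset.mem_singleton, hB, Ne.symm hB,
      Prod.ext_iff, Fin.forall_fin_two]
    ring
  have hRNconst : RN16 (b : ℝ) (fun _ => {1}) = 1 / 4 := by
    unfold RN16
    rw [supp_sum16 hB]
    norm_num [Fin.sum_univ_two, predN16, condMean16, supp16, coord16, Finset.filter_insert,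
      Finset.filter_singleton, Finset.sum_insert, Finset.mem_insert, Finset.mem_singleton,
      hB, Ne.symm hB, Prod.ext_iff, Fin.forall_fin_two]
  have hLB : ∀ pol : ℝ × ℝ → Finset (Fin 2), (∀ x, (pol x).card ≤ 1) →
      1 / 4 ≤ RN16 (b : ℝ) pol := by
    intro pol hcard
    have key : ∀ x ∈ supp16 (b:ℝ),
        (1:ℝ)/4 ≤ ∑ j : Fin 2, (coord16 j x - predN16 (b:ℝ) pol x j) ^ 2 := by
      intro x hx
      have hpol : pol x = ∅ ∨ pol x = {0} ∨ pol x = {1} := by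
        have h4 : pol x = ∅ ∨ pol x = {0} ∨ pol x = {1} ∨ pol x = {0,1} := by
          have : ∀ s : Finset (Fin 2), s = ∅ ∨ s = {0} ∨ s = {1} ∨ s = {0,1} := by decide
          exact this _
        rcases h4 with h|h|h|h
        · exact Or.inl h
        · exact Or.inr (Or.inl h)
        · exact Or.inr (Or.inr h)
        · exfalso; have := hcard x; rw [h] at this; simp at this
      simp only [supp16, Finset.mem_insert, Finset.mem_singleton] at hx
      have hb2 : (1:ℝ)/4 ≤ (b:ℝ)^2/4 := by nlinarith
      rcases hx with h|h|h|h <;> subst h <;>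
        rcases hpol with h|h|h <;>
          · simp only [Fin.sum_univ_two, predN16, h]
            norm_num [condMean16, supp16, coord16, Finset.filter_insert,
              Finset.filter_singleton, Finset.sum_insert, Finset.mem_insert,
              Finset.mem_singleton, hB, Ne.symm hB, Prod.ext_iff, Fin.forall_fin_two] <;>
              nlinarith
    unfold RN16
    have hsum : (1:ℝ) ≤ ∑ x ∈ supp16 (b:ℝ),
        ∑ j : Fin 2, (coord16 j x - predN16 (b:ℝ) pol x j) ^ 2 := by
      calc (1:ℝ) = ∑ _x ∈ supp16 (b:ℝ), (1:ℝ)/4 := by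
            rw [Finset.sum_const]
            have hc : (supp16 (b:ℝ)).card = 4 := by
              unfold supp16
              rw [Finset.card_insert_of_notMem (by simp [Prod.ext_iff, Ne.symm hB]),
                  Finset.card_insert_of_notMem (by simp [Prod.ext_iff]),
                  Finset.card_insert_of_notMem (by simp [Prod.ext_iff, Ne.symm hB]),
                  Finset.card_singleton]
            rw [hc]; norm_num
        _ ≤ _ := Finset.sum_le_sum key
    linarith
  exact ⟨hInj, hRS, hRNsoph, hLB, hRNconst, by rw [hRNsoph, hRNconst]; ring⟩


end
end
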